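/- (L-smoothness of the penalized objective relative to KL.) Let W be a symmetric real N×N matrix, ρ ∈ ℝ, and define F(X;ρ) = Tr(X (W − (ρ/2)I) Xᵀ) + Nρ/2 and L = ‖2W − ρI‖_F. Then for all X, Y ∈ Δ_k^N with X having all entries strictly positive, F(Y;ρ) ≤ F(X;ρ) + ⟨X(2W − ρI), Y − X⟩ + L · KL(Y, X), where ⟨A, B⟩ = Tr(AᵀB) is the Frobenius inner product. -/

import Mathlib

open Matrix

private lemma g_mono' : MonotoneOn (fun t : ℝ => Real.log t - t) (Set.Ioc 0 1) := by
  have h1 : interior (Set.Ioc (0:ℝ) 1) = Set.Ioo 0 1 := interior_Ioc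
  apply monotoneOn_of_deriv_nonneg (convex_Ioc 0 1)
  · exact (Real.continuousOn_log.mono (fun t ht => ne_of_gt ht.1)).sub continuousOn_id
  · rw [h1]
    intro t ht
    exact ((Real.differentiableAt_log (ne_of_gt ht.1)).sub (differentiableAt_fun_id)).differentiableWithinAt
  · rw [h1]
    intro t ht
    have hd : HasDerivAt (fun t : ℝ => Real.log t - t) (t⁻¹ - 1) t :=
      (Real.hasDerivAt_log (ne_of_gt ht.1)).sub (hasDerivAt_id t)
    rw [hd.deriv]
    have : (1:ℝ) ≤ t⁻¹ := (one_le_inv_iff₀).2 ⟨ht.1, le_of_lt ht.2⟩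
    linarith

private lemma pointwise_kl' (x y : ℝ) (hx : 0 < x) (hx1 : x ≤ 1) (hy : 0 ≤ y) (hy1 : y ≤ 1) :
    (y - x) + (y - x) ^ 2 / 2 ≤ y * Real.log (y / x) := by
  rcases eq_or_lt_of_le hy with h0 | hy0
  · rw [← h0]
    norm_num
    nlinarith
  · set f : ℝ → ℝ := fun t => t * Real.log t - t * Real.log x - (t - x) - (t - x) ^ 2 / 2 with hf
    have hfderiv : ∀ t : ℝ, 0 < t → HasDerivAt f (Real.log t - Real.log x - (t - x)) t := by
      intro t ht
      have h1 : HasDerivAt (fun t : ℝ => t * Real.log t) (Real.log t + 1) t :=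
        Real.hasDerivAt_mul_log (ne_of_gt ht)
      have h2 : HasDerivAt (fun t : ℝ => t * Real.log x) (Real.log x) t := by
        simpa using (hasDerivAt_id t).mul_const (Real.log x)
      have h3 : HasDerivAt (fun t : ℝ => t - x) (1:ℝ) t := by
        simpa using (hasDerivAt_id t).sub_const x
      have h4 : HasDerivAt (fun t : ℝ => (t - x) ^ 2 / 2) ((t - x)) t := by
        have := (h3.pow 2).div_const 2
        simpa using this
      have := ((h1.sub h2).sub h3).sub h4
      exact this.congr_deriv (by ring)
    have hcont : Continuous f := by
      have : Continuous fun t : ℝ => t * Real.log t := Real.continuous_mul_log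
      fun_prop
    have hfx : f x = 0 := by simp [hf]
    have key : 0 ≤ f y := by
      rcases le_total x y with hxy | hxy
      · have hmono : MonotoneOn f (Set.Icc x 1) := by
          apply monotoneOn_of_deriv_nonneg (convex_Icc x 1) hcont.continuousOn
          · intro t ht
            rw [interior_Icc] at ht
            exact ((hfderiv t (lt_trans hx ht.1)).differentiableAt).differentiableWithinAt
          · intro t ht
            rw [interior_Icc] at ht
            rw [(hfderiv t (lt_trans hx ht.1)).deriv]
            have := g_mono' (Set.mem_Ioc.2 ⟨hx, hx1⟩)
              (Set.mem_Ioc.2 ⟨lt_trans hx ht.1, le_of_lt ht.2⟩) (le_of_lt ht.1)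
            simp only at this
            linarith
        have := hmono (Set.mem_Icc.2 ⟨le_refl x, hx1⟩) (Set.mem_Icc.2 ⟨hxy, hy1⟩) hxy
        linarith [hfx ▸ this]
      · have hanti : AntitoneOn f (Set.Icc y x) := by
          apply antitoneOn_of_deriv_nonpos (convex_Icc y x) hcont.continuousOn
          · intro t ht
            rw [interior_Icc] at ht
            exact ((hfderiv t (lt_trans hy0 ht.1)).differentiableAt).differentiableWithinAt
          · intro t ht
            rw [interior_Icc] at ht
            rw [(hfderiv t (lt_trans hy0 ht.1)).deriv]
            have := g_mono' (Set.mem_Ioc.2 ⟨lt_trans hy0 ht.1, le_trans (le_of_lt ht.2) hx1⟩)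
              (Set.mem_Ioc.2 ⟨hx, hx1⟩) (le_of_lt ht.2)
            simp only at this
            linarith
        have := hanti (Set.mem_Icc.2 ⟨le_refl y, hxy⟩) (Set.mem_Icc.2 ⟨hxy, le_refl x⟩) hxy
        linarith [hfx ▸ this]
    have hlog : Real.log (y / x) = Real.log y - Real.log x :=
      Real.log_div (ne_of_gt hy0) (ne_of_gt hx)
    rw [hlog]
    simp only [hf] at key
    nlinarith [key]

theorem penalized_L_smooth_KL (k N : ℕ) (W : Matrix (Fin N) (Fin N) ℝ)
    (hW : W.IsSymm) (ρ : ℝ)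
    (X Y : Matrix (Fin k) (Fin N) ℝ)
    (hXpos : ∀ i j, 0 < X i j) (hXcol : ∀ j, ∑ i, X i j = 1)
    (hYnn : ∀ i j, 0 ≤ Y i j) (hYcol : ∀ j, ∑ i, Y i j = 1) :
    Matrix.trace (Y * (W - (ρ / 2) • 1) * Yᵀ) + N * ρ / 2
      ≤ Matrix.trace (X * (W - (ρ / 2) • 1) * Xᵀ) + N * ρ / 2
        + (∑ i, ∑ j, (X * ((2 : ℝ) • W - ρ • (1 : Matrix (Fin N) (Fin N) ℝ))) i j
            * (Y i j - X i j))
        + Real.sqrt (∑ i, ∑ j,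
            (((2 : ℝ) • W - ρ • (1 : Matrix (Fin N) (Fin N) ℝ)) i j) ^ 2)
          * ∑ i, ∑ j, Y i j * Real.log (Y i j / X i j) := by
  set M : Matrix (Fin N) (Fin N) ℝ := (2 : ℝ) • W - ρ • 1 with hM
  set D : Matrix (Fin k) (Fin N) ℝ := Y - X with hD
  set A : Matrix (Fin N) (Fin N) ℝ := W - (ρ / 2) • 1 with hA
  have hMsymm : Mᵀ = M := by
    rw [hM, Matrix.transpose_sub, Matrix.transpose_smul, Matrix.transpose_smul,
      Matrix.transpose_one, hW.eq]
  have hMA : M = (2 : ℝ) • A := by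
    rw [hM, hA, smul_sub, smul_smul]
    congr 1
    ring
  -- entries bounded by 1
  have hXle1 : ∀ i j, X i j ≤ 1 := by
    intro i j
    calc X i j ≤ ∑ i', X i' j :=
          Finset.single_le_sum (fun i' _ => le_of_lt (hXpos i' j)) (Finset.mem_univ i)
      _ = 1 := hXcol j
  have hYle1 : ∀ i j, Y i j ≤ 1 := by
    intro i j
    calc Y i j ≤ ∑ i', Y i' j :=
          Finset.single_le_sum (fun i' _ => hYnn i' j) (Finset.mem_univ i)
      _ = 1 := hYcol j
  -- KL lower bound: ∑∑ D² ≤ 2 * KL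
  set KL : ℝ := ∑ i, ∑ j, Y i j * Real.log (Y i j / X i j) with hKL
  have hDsum : ∑ i, ∑ j, D i j = 0 := by
    rw [Finset.sum_comm (f := fun i j => D i j)]
    simp only [hD, Matrix.sub_apply]
    simp [Finset.sum_sub_distrib, hXcol, hYcol]
  have hPinsker : ∑ i, ∑ j, (D i j) ^ 2 ≤ 2 * KL := by
    have h1 : ∑ i, ∑ j, (D i j + (D i j) ^ 2 / 2) ≤ KL := by
      rw [hKL]
      apply Finset.sum_le_sum
      intro i _
      apply Finset.sum_le_sum
      intro j _
      have := pointwise_kl' (X i j) (Y i j) (hXpos i j) (hXle1 i j) (hYnn i j) (hYle1 i j)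
      simp only [hD, Matrix.sub_apply]
      linarith
    have h2 : ∑ i, ∑ j, (D i j + (D i j) ^ 2 / 2)
        = (∑ i, ∑ j, D i j) + (∑ i, ∑ j, (D i j) ^ 2) / 2 := by
      rw [Finset.sum_div, ← Finset.sum_add_distrib]
      congr 1; ext i
      rw [Finset.sum_div, ← Finset.sum_add_distrib]
    rw [h2, hDsum] at h1
    linarith
  -- inner product as trace
  have hip : ∀ P Q : Matrix (Fin k) (Fin N) ℝ,
      ∑ i, ∑ j, P i j * Q i j = Matrix.trace (P * Qᵀ) := by
    intro P Q
    simp [Matrix.trace, Matrix.mul_apply, Matrix.diag]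
  -- trace identity
  have hswap : Matrix.trace (Y * M * Xᵀ) = Matrix.trace (X * M * Yᵀ) := by
    conv_lhs => rw [← Matrix.trace_transpose]
    rw [Matrix.transpose_mul, Matrix.transpose_mul, Matrix.transpose_transpose, hMsymm,
      ← Matrix.mul_assoc]
  have htrid : Matrix.trace (Y * M * Yᵀ) - Matrix.trace (X * M * Xᵀ)
      - 2 * Matrix.trace (X * M * Dᵀ) = Matrix.trace (D * M * Dᵀ) := by
    simp only [hD, Matrix.sub_mul, Matrix.mul_sub, Matrix.transpose_sub, Matrix.trace_sub]
    linarith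
  have hAtr : ∀ Z : Matrix (Fin k) (Fin N) ℝ,
      Matrix.trace (Z * A * Zᵀ) = (1/2) * Matrix.trace (Z * M * Zᵀ) := by
    intro Z
    rw [hMA, Matrix.mul_smul, Matrix.smul_mul, Matrix.trace_smul]
    simp
  -- quadratic form bound
  set s : Fin N → ℝ := fun j => ∑ i, (D i j) ^ 2 with hs
  set c : Fin N → Fin N → ℝ := fun j l => ∑ i, D i j * D i l with hc
  have htrsum : Matrix.trace (D * M * Dᵀ) = ∑ j, ∑ l, M j l * c j l := by
    conv_rhs => rw [Finset.sum_comm]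
    simp only [Matrix.trace, Matrix.diag, Matrix.mul_apply, Matrix.transpose_apply, hc,
      Finset.mul_sum, Finset.sum_mul]
    rw [Finset.sum_comm]
    congr 1; ext j
    rw [Finset.sum_comm]
    congr 1; ext l
    congr 1; ext i
    ring
  set L : ℝ := Real.sqrt (∑ i, ∑ j, (M i j) ^ 2) with hL
  have hLnn : 0 ≤ L := Real.sqrt_nonneg _
  have hcs : ∑ j, ∑ l, M j l * c j l ≤ L * Real.sqrt (∑ j, ∑ l, (c j l) ^ 2) := by
    have key := Finset.sum_mul_sq_le_sq_mul_sq Finset.univ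
      (fun p : Fin N × Fin N => M p.1 p.2) (fun p : Fin N × Fin N => c p.1 p.2)
    simp only [← Finset.univ_product_univ, Finset.sum_product] at key
    calc ∑ j, ∑ l, M j l * c j l
        ≤ Real.sqrt ((∑ j, ∑ l, M j l * c j l) ^ 2) := by
          rw [Real.sqrt_sq_eq_abs]; exact le_abs_self _
      _ ≤ Real.sqrt ((∑ j, ∑ l, (M j l) ^ 2) * (∑ j, ∑ l, (c j l) ^ 2)) := by
          apply Real.sqrt_le_sqrt
          simpa using key
      _ = L * Real.sqrt (∑ j, ∑ l, (c j l) ^ 2) := by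
          rw [hL, Real.sqrt_mul]
          positivity
  have hcls : Real.sqrt (∑ j, ∑ l, (c j l) ^ 2) ≤ ∑ j, s j := by
    have hsnn : 0 ≤ ∑ j, s j := by positivity
    have h1 : ∑ j, ∑ l, (c j l) ^ 2 ≤ (∑ j, s j) ^ 2 := by
      have h2 : ∀ j l, (c j l) ^ 2 ≤ s j * s l := by
        intro j l
        simpa [hc, hs] using Finset.sum_mul_sq_le_sq_mul_sq Finset.univ
          (fun i => D i j) (fun i => D i l)
      calc ∑ j, ∑ l, (c j l) ^ 2 ≤ ∑ j, ∑ l, s j * s l :=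
            Finset.sum_le_sum (fun j _ => Finset.sum_le_sum (fun l _ => h2 j l))
        _ = (∑ j, s j) ^ 2 := by
            rw [sq, Finset.sum_mul_sum]
    calc Real.sqrt (∑ j, ∑ l, (c j l) ^ 2) ≤ Real.sqrt ((∑ j, s j) ^ 2) :=
          Real.sqrt_le_sqrt h1
      _ = ∑ j, s j := by rw [Real.sqrt_sq hsnn]
  have hsleKL : ∑ j, s j ≤ 2 * KL := by
    calc ∑ j, s j = ∑ i, ∑ j, (D i j) ^ 2 := by rw [Finset.sum_comm]
      _ ≤ 2 * KL := hPinsker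
  -- put everything together
  have hquad : Matrix.trace (D * M * Dᵀ) ≤ L * (2 * KL) := by
    calc Matrix.trace (D * M * Dᵀ) = ∑ j, ∑ l, M j l * c j l := htrsum
      _ ≤ L * Real.sqrt (∑ j, ∑ l, (c j l) ^ 2) := hcs
      _ ≤ L * (∑ j, s j) := by
          apply mul_le_mul_of_nonneg_left hcls hLnn
      _ ≤ L * (2 * KL) := by
          apply mul_le_mul_of_nonneg_left hsleKL hLnn
  have hipX : ∑ i, ∑ j, (X * M) i j * (Y i j - X i j) = Matrix.trace (X * M * Dᵀ) := by
    rw [← hip (X * M) D]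
    simp [hD, Matrix.sub_apply]
  rw [hipX, hAtr X, hAtr Y]
  linarith [hquad, htrid]
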